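/- Let P ∈ ℝ^{n×n} be a row-stochastic matrix and C ∈ ℝ^{m×m} be a row-stochastic matrix, and let Λ ∈ ℝ^{n×n} be a diagonal matrix with 0 ≤ Λ < I (all diagonal entries in [0,1)). Then every eigenvalue of the Kronecker product (ΛP) ⊗ C has real part strictly less than 1. -/

import Mathlib

open Matrix

theorem stmt9 {n m : ℕ} (P : Matrix (Fin n) (Fin n) ℝ) (C : Matrix (Fin m) (Fin m) ℝ)
    (Λ : Matrix (Fin n) (Fin n) ℝ)
    (hPnn : ∀ i j, 0 ≤ P i j) (hProw : ∀ i, ∑ j, P i j = 1)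
    (hCnn : ∀ i j, 0 ≤ C i j) (hCrow : ∀ i, ∑ j, C i j = 1)
    (hΛ : Λ.IsDiag) (hΛ0 : ∀ i, 0 ≤ Λ i i) (hΛ1 : ∀ i, Λ i i < 1) :
    ∀ μ ∈ spectrum ℂ ((Matrix.kroneckerMap (· * ·) (Λ * P) C).map Complex.ofReal),
      μ.re < 1 := by
  intro μ hμ
  set K : Matrix (Fin n × Fin m) (Fin n × Fin m) ℝ :=
    Matrix.kroneckerMap (· * ·) (Λ * P) C with hKdef
  have hLP : ∀ a b, (Λ * P) a b = Λ a a * P a b := by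
    intro a b
    rw [Matrix.mul_apply, Finset.sum_eq_single a]
    · intro k _ hk
      rw [hΛ hk.symm, zero_mul]
    · simp
  have hKentry : ∀ i j : Fin n × Fin m, K i j = Λ i.1 i.1 * P i.1 j.1 * C i.2 j.2 := by
    intro i j
    simp [hKdef, Matrix.kroneckerMap, hLP]
  have hKnn : ∀ i j, 0 ≤ K i j := by
    intro i j
    rw [hKentry]
    exact mul_nonneg (mul_nonneg (hΛ0 _) (hPnn _ _)) (hCnn _ _)
  have hKrow : ∀ i, ∑ j, K i j = Λ i.1 i.1 := by
    intro i
    rw [Fintype.sum_prod_type]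
    have : ∀ j1, ∑ j2, K i (j1, j2) = Λ i.1 i.1 * P i.1 j1 := by
      intro j1
      simp only [hKentry]
      rw [← Finset.mul_sum, hCrow, mul_one]
    simp only [this]
    rw [← Finset.mul_sum, hProw, mul_one]
  -- from spectrum to eigenvector
  rw [spectrum.mem_iff, Matrix.isUnit_iff_isUnit_det, isUnit_iff_ne_zero, not_not]
    at hμ
  obtain ⟨v, hv0, hv⟩ := (Matrix.exists_mulVec_eq_zero_iff).mpr hμ
  have key : ∀ i, μ * v i = ∑ j, (K i j : ℂ) * v j := by
    intro i
    have := congrFun hv i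
    simp only [Matrix.sub_mulVec, Pi.sub_apply, Pi.zero_apply, sub_eq_zero] at this
    have h1 : (algebraMap ℂ (Matrix (Fin n × Fin m) (Fin n × Fin m) ℂ) μ).mulVec v i
        = μ * v i := by
      simp [Matrix.mulVec, dotProduct, Matrix.algebraMap_matrix_apply,
        Finset.sum_ite_eq]
    have h2 : ((K.map Complex.ofReal).mulVec v) i = ∑ j, (K i j : ℂ) * v j := by
      simp [Matrix.mulVec, dotProduct]
    rw [← h1, ← h2, this]
  obtain ⟨k, hk⟩ := Function.ne_iff.mp hv0
  have : Nonempty (Fin n × Fin m) := ⟨k⟩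
  obtain ⟨i, -, hi⟩ := Finset.exists_max_image Finset.univ (fun j => ‖v j‖)
    ⟨k, Finset.mem_univ k⟩
  have hvi : 0 < ‖v i‖ :=
    lt_of_lt_of_le (by simpa using hk) (hi k (Finset.mem_univ k))
  have hbound : ‖μ‖ * ‖v i‖ ≤ Λ i.1 i.1 * ‖v i‖ := by
    calc ‖μ‖ * ‖v i‖ = ‖μ * v i‖ := (norm_mul _ _).symm
    _ = ‖∑ j, (K i j : ℂ) * v j‖ := by rw [key i]
    _ ≤ ∑ j, ‖(K i j : ℂ) * v j‖ := norm_sum_le _ _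
    _ = ∑ j, K i j * ‖v j‖ := by
        refine Finset.sum_congr rfl fun j _ => ?_
        rw [norm_mul, Complex.norm_real, Real.norm_of_nonneg (hKnn i j)]
    _ ≤ ∑ j, K i j * ‖v i‖ := by
        refine Finset.sum_le_sum fun j _ => ?_
        exact mul_le_mul_of_nonneg_left (hi j (Finset.mem_univ j)) (hKnn i j)
    _ = Λ i.1 i.1 * ‖v i‖ := by rw [← Finset.sum_mul, hKrow]
  have habs : ‖μ‖ ≤ Λ i.1 i.1 := le_of_mul_le_mul_right hbound hvi
  calc μ.re ≤ ‖μ‖ := Complex.re_le_norm μ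
  _ ≤ Λ i.1 i.1 := habs
  _ < 1 := hΛ1 _
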